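/- Let v_1,…,v_n be vectors in ℂ^d, not all zero, forming a tight frame for ℂ^d. Then (v_j), viewed as vectors in ℝ^{2d}, is a tight frame for ℝ^{2d} if and only if Σ_j Σ_k ⟨v_j,v_k⟩² = 0; moreover, Σ_j Σ_k ⟨v_j,v_k⟩² ≥ 0 always holds. -/

import Mathlib

open Finset

-- (★): collapse of the frame operator
lemma aux_star {d n : ℕ} (v : Fin n → EuclideanSpace ℂ (Fin d)) (c : ℝ)
    (hframe : ∀ x : EuclideanSpace ℂ (Fin d),
      ∑ j, (inner ℂ (v j) x : ℂ) • v j = (c : ℂ) • x)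
    (x y : EuclideanSpace ℂ (Fin d)) :
    ∑ j, (inner ℂ x (v j) : ℂ) * inner ℂ (v j) y = (c:ℂ) * inner ℂ x y := by
  have h := congrArg (fun z : EuclideanSpace ℂ (Fin d) => (inner ℂ z y : ℂ)) (hframe x)
  simp only [sum_inner, inner_smul_left, Complex.conj_ofReal] at h
  calc ∑ j, (inner ℂ x (v j) : ℂ) * inner ℂ (v j) y
      = ∑ j, (starRingEnd ℂ) (inner ℂ (v j) x : ℂ) * inner ℂ (v j) y :=
        Finset.sum_congr rfl fun j _ => by rw [inner_conj_symm]
    _ = (c:ℂ) * inner ℂ x y := h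

-- c * A = sum of norms squared
lemma aux_cA {d n : ℕ} (v : Fin n → EuclideanSpace ℂ (Fin d)) (c : ℝ)
    (hframe : ∀ x : EuclideanSpace ℂ (Fin d),
      ∑ j, (inner ℂ (v j) x : ℂ) • v j = (c : ℂ) • x) :
    (c:ℂ) * ∑ j, ∑ k, (inner ℂ (v j) (v k) : ℂ) ^ 2
      = ∑ i, ((‖∑ k, (inner ℂ (v i) (v k) : ℂ) • v k‖ : ℝ) : ℂ) ^ 2 := by
  have expand : ∀ i, (((‖∑ k, (inner ℂ (v i) (v k) : ℂ) • v k‖ : ℝ)) : ℂ) ^ 2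
      = ∑ j, ∑ k, (inner ℂ (v j) (v i) : ℂ) * inner ℂ (v i) (v k) * inner ℂ (v j) (v k) := by
    intro i
    have hs : (((‖∑ k, (inner ℂ (v i) (v k) : ℂ) • v k‖ : ℝ)) : ℂ) ^ 2
        = (inner ℂ (∑ k, (inner ℂ (v i) (v k) : ℂ) • v k)
            (∑ k, (inner ℂ (v i) (v k) : ℂ) • v k) : ℂ) :=
      (inner_self_eq_norm_sq_to_K (𝕜 := ℂ) (E := EuclideanSpace ℂ (Fin d)) _).symm
    rw [hs, sum_inner]
    refine Finset.sum_congr rfl fun j _ => ?_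
    rw [inner_smul_left, inner_sum, Finset.mul_sum]
    refine Finset.sum_congr rfl fun k _ => ?_
    rw [inner_smul_right, inner_conj_symm]
    ring
  calc (c:ℂ) * ∑ j, ∑ k, (inner ℂ (v j) (v k):ℂ)^2
      = ∑ j, ∑ k, (∑ i, (inner ℂ (v j) (v i):ℂ) * inner ℂ (v i) (v k)) * inner ℂ (v j) (v k) := by
        rw [Finset.mul_sum]
        refine Finset.sum_congr rfl fun j _ => ?_
        rw [Finset.mul_sum]
        refine Finset.sum_congr rfl fun k _ => ?_
        rw [aux_star v c hframe]
        ring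
    _ = ∑ j, ∑ k, ∑ i, (inner ℂ (v j) (v i):ℂ) * inner ℂ (v i) (v k) * inner ℂ (v j) (v k) := by
        refine Finset.sum_congr rfl fun j _ => Finset.sum_congr rfl fun k _ => ?_
        rw [Finset.sum_mul]
    _ = ∑ j, ∑ i, ∑ k, (inner ℂ (v j) (v i):ℂ) * inner ℂ (v i) (v k) * inner ℂ (v j) (v k) :=
        Finset.sum_congr rfl fun j _ => Finset.sum_comm
    _ = ∑ i, ∑ j, ∑ k, (inner ℂ (v j) (v i):ℂ) * inner ℂ (v i) (v k) * inner ℂ (v j) (v k) :=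
        Finset.sum_comm
    _ = _ := Finset.sum_congr rfl fun i _ => (expand i).symm

-- if S vanishes on the frame vectors then it vanishes everywhere
lemma aux_Tzero {d n : ℕ} (v : Fin n → EuclideanSpace ℂ (Fin d))
    (hTv : ∀ i, ∑ k, (inner ℂ (v i) (v k) : ℂ) • v k = 0)
    (x : EuclideanSpace ℂ (Fin d)) :
    ∑ j, (inner ℂ x (v j) : ℂ) • v j = 0 := by
  have hz : ∀ j, (inner ℂ (∑ k, (inner ℂ x (v k) : ℂ) • v k) (v j) : ℂ) = 0 := by
    intro j
    have h0 := congrArg (fun z : EuclideanSpace ℂ (Fin d) => (inner ℂ z x : ℂ)) (hTv j)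
    simp only [sum_inner, inner_smul_left, inner_conj_symm, inner_zero_left] at h0 ⊢
    calc ∑ k, (inner ℂ (v k) x : ℂ) * inner ℂ (v k) (v j)
        = ∑ k, (inner ℂ (v k) (v j) : ℂ) * inner ℂ (v k) x :=
          Finset.sum_congr rfl fun k _ => mul_comm _ _
      _ = 0 := h0
  have h1 : (inner ℂ (∑ j, (inner ℂ x (v j) : ℂ) • v j)
      (∑ j, (inner ℂ x (v j) : ℂ) • v j) : ℂ) = 0 := by
    rw [inner_sum]
    refine Finset.sum_eq_zero fun j _ => ?_
    rw [inner_smul_right, hz j, mul_zero]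
  exact inner_self_eq_zero.mp h1

theorem complex_tight_frame_real_tight_frame_iff (d : ℕ) (hd : 1 ≤ d)
    (n : ℕ) (v : Fin n → EuclideanSpace ℂ (Fin d)) (hv : ∃ j, v j ≠ 0)
    (htight : ∃ c : ℝ, 0 < c ∧ ∀ x : EuclideanSpace ℂ (Fin d),
      ∑ j, (inner ℂ (v j) x : ℂ) • v j = (c : ℂ) • x) :
    ((∃ c : ℝ, 0 < c ∧ ∀ x : EuclideanSpace ℂ (Fin d),
        ∑ j, ((inner ℂ (v j) x : ℂ)).re • v j = c • x) ↔
      ∑ j, ∑ k, (inner ℂ (v j) (v k) : ℂ) ^ 2 = 0) ∧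
    0 ≤ (∑ j, ∑ k, (inner ℂ (v j) (v k) : ℂ) ^ 2).re ∧
    (∑ j, ∑ k, (inner ℂ (v j) (v k) : ℂ) ^ 2).im = 0 := by
  obtain ⟨c, hc, hframe⟩ := htight
  have hc0 : (c:ℂ) ≠ 0 := by exact_mod_cast hc.ne'
  set A : ℂ := ∑ j, ∑ k, (inner ℂ (v j) (v k) : ℂ) ^ 2 with hAdef
  set N : ℝ := ∑ i, ‖∑ k, (inner ℂ (v i) (v k) : ℂ) • v k‖ ^ 2 with hNdef
  have hN0 : 0 ≤ N := Finset.sum_nonneg fun i _ => sq_nonneg _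
  have hA : (c:ℂ) * A = (N:ℂ) := by
    rw [hAdef, aux_cA v c hframe, hNdef]
    push_cast
    rfl
  have hA2 : A = ((N / c : ℝ) : ℂ) := by
    rw [Complex.ofReal_div, eq_div_iff hc0, mul_comm, hA]
  have hsmul : ∀ (r : ℝ) (x : EuclideanSpace ℂ (Fin d)), r • x = (r:ℂ) • x := fun _ _ => rfl
  -- expansion of the real frame operator
  have hre : ∀ x : EuclideanSpace ℂ (Fin d),
      (∑ j, ((inner ℂ (v j) x : ℂ)).re • v j)
        = (2:ℂ)⁻¹ • ((c:ℂ) • x + ∑ j, (inner ℂ x (v j) : ℂ) • v j) := by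
    intro x
    rw [← hframe x, ← Finset.sum_add_distrib, Finset.smul_sum]
    refine Finset.sum_congr rfl fun j _ => ?_
    rw [hsmul, ← add_smul, smul_smul]
    congr 1
    have h := Complex.add_conj (inner ℂ (v j) x : ℂ)
    rw [inner_conj_symm] at h
    have h2 : ((inner ℂ (v j) x : ℂ)) + (inner ℂ x (v j) : ℂ)
        = 2 * (((inner ℂ (v j) x : ℂ)).re : ℂ) := by
      rw [h]; push_cast; ring
    linear_combination (-(2:ℂ)⁻¹) * h2
  constructor
  · constructor
    · -- real tight frame → A = 0
      rintro ⟨c', hc', hr⟩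
      have key : ∀ x : EuclideanSpace ℂ (Fin d),
          ∑ j, (inner ℂ x (v j) : ℂ) • v j = (2 * (c':ℂ) - (c:ℂ)) • x := by
        intro x
        have h2 := (hre x).symm.trans ((hr x).trans (hsmul c' x))
        have h3 : (c:ℂ) • x + ∑ j, (inner ℂ x (v j) : ℂ) • v j = (2 * (c':ℂ)) • x := by
          have h4 := congrArg (fun z : EuclideanSpace ℂ (Fin d) => (2:ℂ) • z) h2
          simpa only [smul_smul, mul_inv_cancel₀ (two_ne_zero (α := ℂ)), one_smul] using h4
        rw [sub_smul, eq_sub_iff_add_eq, add_comm]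
        exact h3
      have hIz : (2 * (c':ℂ) - (c:ℂ)) = 0 := by
        obtain ⟨j0, hj0⟩ := hv
        have k1 := key (Complex.I • v j0)
        have k2 : ∑ j, (inner ℂ (Complex.I • v j0) (v j) : ℂ) • v j
            = (-Complex.I) • ∑ j, (inner ℂ (v j0) (v j) : ℂ) • v j := by
          rw [Finset.smul_sum]
          refine Finset.sum_congr rfl fun j _ => ?_
          rw [inner_smul_left, smul_smul, Complex.conj_I]
        rw [k2, key (v j0), smul_smul, smul_smul] at k1
        have k3 : ((2 * (c':ℂ) - (c:ℂ)) * Complex.I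
            - (-Complex.I * (2 * (c':ℂ) - (c:ℂ)))) • v j0 = 0 := by
          rw [sub_smul, k1, sub_self]
        rcases smul_eq_zero.mp k3 with h | h
        · linear_combination (-(Complex.I)/2) * h + (2 * (c':ℂ) - (c:ℂ)) * Complex.I_sq
        · exact absurd h hj0
      have hTv : ∀ i, ∑ k, (inner ℂ (v i) (v k) : ℂ) • v k = 0 := by
        intro i; rw [key (v i), hIz, zero_smul]
      have hNz : N = 0 := by
        rw [hNdef]
        exact Finset.sum_eq_zero fun i _ => by rw [hTv i]; simp
      rw [hA2, hNz]; simp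
    · -- A = 0 → real tight frame
      intro hAz
      have hNz : N = 0 := by
        have h := hA
        rw [hAz, mul_zero] at h
        exact_mod_cast h.symm
      have hTv : ∀ i, ∑ k, (inner ℂ (v i) (v k) : ℂ) • v k = 0 := by
        intro i
        have h := (Finset.sum_eq_zero_iff_of_nonneg (fun i _ => sq_nonneg
          ‖∑ k, (inner ℂ (v i) (v k) : ℂ) • v k‖)).mp hNz i (Finset.mem_univ i)
        have h2 := pow_eq_zero_iff (n := 2) (by norm_num) |>.mp h
        exact norm_eq_zero.mp h2
      refine ⟨c/2, by positivity, fun x => ?_⟩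
      rw [hre x, aux_Tzero v hTv x, add_zero, hsmul, smul_smul]
      congr 1
      push_cast
      ring
  · constructor
    · rw [hA2]; simp only [Complex.ofReal_re]; positivity
    · rw [hA2]; simp
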